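/- arXiv:2408.10896 — 2 statements merged into one kernel-verified Lean document; each statement's English description precedes it below -/
import Mathlib

section
/- Let A be a finite poset, D_A its set of minimal elements, G_A the graph on D_A with edges {β,β'} whenever β,β' ≤ α for some α ∈ A. For an edge (β,β') define Θ(β,β') = {γ ∈ D_A : A(β) ∩ A(β') ⊆ A(γ)} where A(β) is the principal up-set of β, and length θ(β,β') = |Θ(β,β')|. Let T be a locally connected spanning tree of G_A, let (b₀,b_n) be an edge of G_A not in T, let C be the cycle of T + (b₀,b_n), and let (b_{i-1},b_i) be any edge of the path C − (b₀,b_n). Set T' = T + (b₀,b_n) − (b_{i-1},b_i). If θ(T') ≤ θ(T), then θ(T') = θ(T) and T' is also locally connected. -/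
open scoped Classical

/-- The minimal elements of a poset `A`. -/
abbrev Dmin (A : Type*) [PartialOrder A] : Type _ := {a : A // IsMin a}

/-- The graph of interlaced relation on the minimal elements of `A`. -/
def interlaced (A : Type*) [PartialOrder A] : SimpleGraph (Dmin A) where
  Adj β β' := β ≠ β' ∧ ∃ α : A, β.1 ≤ α ∧ β'.1 ≤ α
  symm := ⟨by
    rintro β β' ⟨hne, α, h1, h2⟩
    exact ⟨hne.symm, α, h2, h1⟩⟩
  loopless := ⟨by rintro β ⟨hne, -⟩; exact hne rfl⟩

/-- Local connectedness of a spanning tree of the graph of interlaced relation. -/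
def LocallyConnected {A : Type*} [PartialOrder A] (T : SimpleGraph (Dmin A)) : Prop :=
  ∀ α : A, (T.induce {β : Dmin A | β.1 ≤ α}).Connected

/-- The length `θ(β,β') = |Θ(β,β')|` of an edge, where
`Θ(β,β') = {γ ∈ D_A : A(β) ∩ A(β') ⊆ A(γ)}`. -/
noncomputable def edgeLength {A : Type*} [Fintype A] [PartialOrder A]
    (e : Sym2 (Dmin A)) : ℕ :=
  Nat.card {γ : Dmin A // ∀ α : A, (∀ β ∈ e, (β : Dmin A).1 ≤ α) → γ.1 ≤ α}

/-- The weight of a graph on the minimal elements with respect to the lengths `θ`. -/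
noncomputable def weightA {A : Type*} [Fintype A] [PartialOrder A]
    (T : SimpleGraph (Dmin A)) : ℕ :=
  ∑ e : Sym2 (Dmin A), if e ∈ T.edgeSet then edgeLength e else 0

open SimpleGraph in
/-- Lemma 4.4: exchanging an edge of a locally connected spanning tree `T` along the
cycle created by a new edge `(b₀,bₙ)`, if the weight does not increase then it stays
the same and the new spanning tree `T'` is again locally connected. -/
theorem stmt_9 {A : Type*} [Fintype A] [PartialOrder A]
    (T : SimpleGraph (Dmin A)) (hT : T ≤ interlaced A ∧ T.IsTree)
    (hlc : LocallyConnected T)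
    (b0 bn : Dmin A) (he : (interlaced A).Adj b0 bn) (henT : ¬ T.Adj b0 bn)
    (f : Sym2 (Dmin A)) (hf : f ∈ T.edgeSet) (hfne : f ≠ s(b0, bn))
    (T' : SimpleGraph (Dmin A))
    (hT'edges : T'.edgeSet = (T.edgeSet ∪ {s(b0, bn)}) \ {f})
    (hT' : T' ≤ interlaced A ∧ T'.IsTree)
    (hw : weightA T' ≤ weightA T) :
    weightA T' = weightA T ∧ LocallyConnected T' := by
  obtain ⟨x, y, rfl⟩ : ∃ x y, f = s(x, y) := by
    induction f using Sym2.ind with | _ x y => exact ⟨x, y, rfl⟩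
  have hxy : T.Adj x y := T.mem_edgeSet.mp hf
  -- T' contains the edge (b0, bn)
  have hT'b0bn : T'.Adj b0 bn := by
    rw [← SimpleGraph.mem_edgeSet, hT'edges]
    exact ⟨Or.inr rfl, fun h => hfne (Set.mem_singleton_iff.mp h).symm⟩
  -- Claim A: every walk in T from b0 to bn traverses the edge s(x,y)
  have claimA : ∀ (w : T.Walk b0 bn), s(x, y) ∈ w.edges := by
    intro w
    by_contra hfw
    have hsub : ∀ e ∈ (w.toPath : T.Walk b0 bn).edges, e ∈ T'.edgeSet := by
      intro e hew
      have heT : e ∈ T.edgeSet := SimpleGraph.Walk.edges_subset_edgeSet _ hew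
      have hne : e ≠ s(x, y) := fun h => hfw (w.edges_toPath_subset (h ▸ hew))
      rw [hT'edges]; exact ⟨Or.inl heT, hne⟩
    set q := (w.toPath : T.Walk b0 bn).transfer T' hsub with hq_def
    have hq : q.IsPath := (w.toPath.2).transfer hsub
    have hnotmem : s(b0, bn) ∉ q.reverse.edges := by
      intro hmem
      rw [SimpleGraph.Walk.edges_reverse, List.mem_reverse, hq_def,
        SimpleGraph.Walk.edges_transfer] at hmem
      exact henT (T.mem_edgeSet.mp (SimpleGraph.Walk.edges_subset_edgeSet _ hmem))
    have hcyc := SimpleGraph.Path.cons_isCycle ⟨q.reverse, hq.reverse⟩ hT'b0bn hnotmem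
    exact hT'.2.IsAcyclic _ hcyc
  -- Claim B: common upper bounds of b0, bn are common upper bounds of x, y
  have claimB : ∀ α : A, b0.1 ≤ α → bn.1 ≤ α → x.1 ≤ α ∧ y.1 ≤ α := by
    intro α h0 hn
    obtain ⟨w⟩ := (hlc α).preconnected ⟨b0, h0⟩ ⟨bn, hn⟩
    have hfw : s(x, y) ∈
        (w.map (SimpleGraph.Embedding.induce {β : Dmin A | β.1 ≤ α}).toHom).edges :=
      claimA _
    have hx : x ∈ (w.map (SimpleGraph.Embedding.induce {β : Dmin A | β.1 ≤ α}).toHom).support :=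
      SimpleGraph.Walk.fst_mem_support_of_mem_edges _ hfw
    have hy : y ∈ (w.map (SimpleGraph.Embedding.induce {β : Dmin A | β.1 ≤ α}).toHom).support :=
      SimpleGraph.Walk.snd_mem_support_of_mem_edges _ hfw
    rw [SimpleGraph.Walk.support_map, List.mem_map] at hx hy
    obtain ⟨u, -, hu⟩ := hx
    obtain ⟨v, -, hv⟩ := hy
    exact ⟨hu ▸ u.2, hv ▸ v.2⟩
  -- Θ sets
  set Θf : Set (Dmin A) := {γ | ∀ α : A, (∀ β ∈ s(x, y), (β : Dmin A).1 ≤ α) → γ.1 ≤ α} with hΘf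
  set Θe : Set (Dmin A) :=
    {γ | ∀ α : A, (∀ β ∈ s(b0, bn), (β : Dmin A).1 ≤ α) → γ.1 ≤ α} with hΘe
  have hsubΘ : Θf ⊆ Θe := by
    intro γ hγ α hα
    have h0 : b0.1 ≤ α := hα b0 (by simp)
    have hn : bn.1 ≤ α := hα bn (by simp)
    obtain ⟨hxα, hyα⟩ := claimB α h0 hn
    refine hγ α ?_
    intro β hβ
    rcases Sym2.mem_iff.mp hβ with rfl | rfl
    · exact hxα
    · exact hyα
  have hlenf : edgeLength s(x, y) = Θf.ncard := Nat.card_coe_set_eq Θf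
  have hlene : edgeLength s(b0, bn) = Θe.ncard := Nat.card_coe_set_eq Θe
  have hle : edgeLength s(x, y) ≤ edgeLength s(b0, bn) := by
    rw [hlenf, hlene]
    exact Set.ncard_le_ncard hsubΘ (Set.toFinite _)
  -- the weight identity
  have hkey : ∀ e : Sym2 (Dmin A),
      ((if e ∈ T'.edgeSet then edgeLength e else 0) + (if e = s(x, y) then edgeLength e else 0))
      = ((if e ∈ T.edgeSet then edgeLength e else 0)
          + (if e = s(b0, bn) then edgeLength e else 0)) := by
    intro e
    simp only [hT'edges]
    by_cases h1 : e = s(x, y)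
    · subst h1
      simp only [Set.mem_diff, Set.mem_union, Set.mem_singleton_iff]
      simp [hf, hfne]
    · by_cases h2 : e = s(b0, bn)
      · subst h2
        simp only [Set.mem_diff, Set.mem_union, Set.mem_singleton_iff]
        have : s(b0, bn) ∉ T.edgeSet := fun h => henT (T.mem_edgeSet.mp h)
        simp [this, fun h => hfne (Eq.symm h), h1, Ne.symm h1]
      · simp only [Set.mem_diff, Set.mem_union, Set.mem_singleton_iff]
        simp [h1, h2]
  have hsum : weightA T' + edgeLength s(x, y) = weightA T + edgeLength s(b0, bn) := by
    have h1 : (∑ e : Sym2 (Dmin A), if e = s(x, y) then edgeLength e else 0)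
        = edgeLength s(x, y) := by
      rw [Finset.sum_ite_eq']; simp
    have h2 : (∑ e : Sym2 (Dmin A), if e = s(b0, bn) then edgeLength e else 0)
        = edgeLength s(b0, bn) := by
      rw [Finset.sum_ite_eq']; simp
    unfold weightA
    rw [← h1, ← h2, ← Finset.sum_add_distrib, ← Finset.sum_add_distrib]
    exact Finset.sum_congr rfl fun e _ => hkey e
  have hweq : weightA T' = weightA T := le_antisymm hw (by omega)
  have hleneq : edgeLength s(x, y) = edgeLength s(b0, bn) := by omega
  refine ⟨hweq, ?_⟩
  -- Θf = Θe
  have hΘeq : Θf = Θe := by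
    refine Set.eq_of_subset_of_ncard_le hsubΘ ?_ (Set.toFinite _)
    rw [← hlenf, ← hlene, hleneq]
  have hb0Θ : ∀ α : A, x.1 ≤ α → y.1 ≤ α → b0.1 ≤ α := by
    intro α hxα hyα
    have hb0 : b0 ∈ Θe := fun α' hα' => hα' b0 (by simp)
    rw [← hΘeq] at hb0
    refine hb0 α ?_
    intro β hβ
    rcases Sym2.mem_iff.mp hβ with rfl | rfl
    · exact hxα
    · exact hyα
  have hbnΘ : ∀ α : A, x.1 ≤ α → y.1 ≤ α → bn.1 ≤ α := by
    intro α hxα hyα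
    have hbn : bn ∈ Θe := fun α' hα' => hα' bn (by simp)
    rw [← hΘeq] at hbn
    refine hbn α ?_
    intro β hβ
    rcases Sym2.mem_iff.mp hβ with rfl | rfl
    · exact hxα
    · exact hyα
  -- local connectedness of T'
  intro α
  set S : Set (Dmin A) := {β : Dmin A | β.1 ≤ α} with hS
  have hG : (T.induce S).Connected := hlc α
  by_cases hxyS : x.1 ≤ α ∧ y.1 ≤ α
  · -- the removed edge lies inside S
    obtain ⟨hxS, hyS⟩ := hxyS
    have hb0S : b0.1 ≤ α := hb0Θ α hxS hyS
    have hbnS : bn.1 ≤ α := hbnΘ α hxS hyS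
    set D : SimpleGraph S := (T.deleteEdges {s(x, y)}).induce S with hD
    -- every vertex of S reaches x or y in D
    have key : ∀ (u v : S), (T.induce S).Walk u v →
        (D.Reachable v ⟨x, hxS⟩ ∨ D.Reachable v ⟨y, hyS⟩) →
        (D.Reachable u ⟨x, hxS⟩ ∨ D.Reachable u ⟨y, hyS⟩) := by
      intro u v w
      induction w with
      | nil => exact id
      | @cons a b c h p ih =>
        intro hv
        by_cases hef : s(a.1, b.1) = s(x, y)
        · rcases Sym2.eq_iff.mp hef with ⟨h1, -⟩ | ⟨h1, -⟩
          · exact Or.inl (by rw [show a = ⟨x, hxS⟩ from Subtype.ext h1])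
          · exact Or.inr (by rw [show a = ⟨y, hyS⟩ from Subtype.ext h1])
        · have hDadj : D.Adj a b := by
            show (T.deleteEdges {s(x, y)}).Adj a.1 b.1
            rw [SimpleGraph.deleteEdges_adj]
            exact ⟨h, by simpa using hef⟩
          rcases ih hv with h' | h'
          · exact Or.inl (hDadj.reachable.trans h')
          · exact Or.inr (hDadj.reachable.trans h')
    have hreach : ∀ u : S, D.Reachable u ⟨x, hxS⟩ ∨ D.Reachable u ⟨y, hyS⟩ := by
      intro u
      obtain ⟨w⟩ := hG.preconnected u ⟨x, hxS⟩
      exact key u ⟨x, hxS⟩ w (Or.inl (SimpleGraph.Reachable.refl _))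
    -- b0 and bn cannot both reach the same endpoint in D
    have hnotboth : ∀ z : S, D.Reachable ⟨b0, hb0S⟩ z → D.Reachable ⟨bn, hbnS⟩ z → False := by
      intro z h1 h2
      obtain ⟨w⟩ := h1.trans h2.symm
      set w1 := w.map (SimpleGraph.Embedding.induce S).toHom with hw1
      have hsub1 : ∀ e ∈ w1.edges, e ∈ T.edgeSet := by
        intro e he'
        have := SimpleGraph.Walk.edges_subset_edgeSet _ he'
        rw [SimpleGraph.edgeSet_deleteEdges] at this
        exact this.1
      have hmem := claimA (w1.transfer T hsub1)
      replace hmem : s(x, y) ∈ w1.edges := (SimpleGraph.Walk.edges_transfer w1 hsub1) ▸ hmem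
      have := SimpleGraph.Walk.edges_subset_edgeSet w1 hmem
      rw [SimpleGraph.edgeSet_deleteEdges] at this
      exact this.2 rfl
    have hDle : D ≤ T'.induce S := by
      intro u v huv
      have huv' : (T.deleteEdges {s(x, y)}).Adj u.1 v.1 := huv
      rw [SimpleGraph.deleteEdges_adj] at huv'
      show T'.Adj u.1 v.1
      rw [← SimpleGraph.mem_edgeSet, hT'edges]
      exact ⟨Or.inl (T.mem_edgeSet.mpr huv'.1), by simpa using huv'.2⟩
    have hedge : (T'.induce S).Adj ⟨b0, hb0S⟩ ⟨bn, hbnS⟩ := hT'b0bn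
    have hxy' : (T'.induce S).Reachable ⟨x, hxS⟩ ⟨y, hyS⟩ := by
      rcases hreach ⟨b0, hb0S⟩ with h1 | h1 <;> rcases hreach ⟨bn, hbnS⟩ with h2 | h2
      · exact absurd (hnotboth _ h1 h2) (by simp)
      · exact ((h1.mono hDle).symm.trans (hedge.reachable.trans (h2.mono hDle)))
      · exact (h2.mono hDle).symm.trans (hedge.symm.reachable.trans (h1.mono hDle))
      · exact absurd (hnotboth _ h1 h2) (by simp)
    rw [SimpleGraph.connected_iff]
    refine ⟨?_, ⟨⟨x, hxS⟩⟩⟩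
    intro u v
    have Ru : (T'.induce S).Reachable u ⟨x, hxS⟩ := by
      rcases hreach u with h' | h'
      · exact h'.mono hDle
      · exact (h'.mono hDle).trans hxy'.symm
    have Rv : (T'.induce S).Reachable v ⟨x, hxS⟩ := by
      rcases hreach v with h' | h'
      · exact h'.mono hDle
      · exact (h'.mono hDle).trans hxy'.symm
    exact Ru.trans Rv.symm
  · -- the removed edge is not inside S
    refine hG.mono ?_
    intro u v huv
    show T'.Adj u.1 v.1
    rw [← SimpleGraph.mem_edgeSet, hT'edges]
    refine ⟨Or.inl (T.mem_edgeSet.mpr huv), ?_⟩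
    intro h
    rcases Sym2.eq_iff.mp (Set.mem_singleton_iff.mp h) with ⟨h1, h2⟩ | ⟨h1, h2⟩
    · exact hxyS ⟨h1 ▸ u.2, h2 ▸ v.2⟩
    · exact hxyS ⟨h2 ▸ v.2, h1 ▸ u.2⟩
end

section
/- Let A be a finite poset whose graph of interlaced relation G_A is connected, and suppose T is a minimum weight spanning tree of G_A (with lengths θ(β,β') = |Θ(β,β')|) such that T ∩ D_A(a₀) is disconnected for some a₀ ∈ A. Choose x₀ = b₀ in one component of T ∩ D_A(a₀) such that a path (x₀, …, x_m) in T, with m ≥ 2, uses no edges of T ∩ D_A(a₀) and ends at x_m in another component of T ∩ D_A(a₀). Then for each i = 1, …, m, the set (A(x_{i-1}) ∩ A(x_i)) \ (A(b₀) ∩ A(x_m)) is nonempty. -/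
open scoped Classical

private lemma chain_reach {V : Type*} (G : SimpleGraph V) (y : ℕ → V) (a : ℕ) :
    ∀ b : ℕ, a ≤ b → (∀ j, a ≤ j → j < b → G.Adj (y j) (y (j+1))) →
    G.Reachable (y a) (y b) := by
  intro b hab
  induction b, hab using Nat.le_induction with
  | base => intro _; exact SimpleGraph.Reachable.refl _
  | succ b hab ih =>
    intro h
    exact (ih fun j hj hj' => h j hj (by omega)).trans (h b hab (by omega)).reachable

private lemma reach_trans {V : Type*} {G H : SimpleGraph V}
    (h : ∀ a b : V, G.Adj a b → H.Reachable a b) {a b : V} (hr : G.Reachable a b) :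
    H.Reachable a b := by
  obtain ⟨w⟩ := hr
  induction w with
  | nil => exact SimpleGraph.Reachable.refl _
  | cons ha p ih => exact (h _ _ ha).trans ih


/-- Part of Lemma 4.6: if `T` is a minimum weight spanning tree of the graph of
interlaced relation, `T ∩ D_A(a₀)` is disconnected, and `(x₀, …, x_m)` (`m ≥ 2`) is a
path in `T` from `b₀ = x₀` to `x_m` lying in different components of `T ∩ D_A(a₀)`
using no edges of `T ∩ D_A(a₀)`, then for each `i = 1, …, m` the set
`(A(x_{i-1}) ∩ A(x_i)) \ (A(b₀) ∩ A(x_m))` is nonempty. -/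
theorem stmt_15 {A : Type*} [Fintype A] [PartialOrder A]
    (T : SimpleGraph (Dmin A)) (hT : T ≤ interlaced A ∧ T.IsTree)
    (hmin : ∀ T', T' ≤ interlaced A → T'.IsTree → weightA T ≤ weightA T')
    (a0 : A)
    (hdisc : ¬ (T.induce {β : Dmin A | β.1 ≤ a0}).Connected)
    (m : ℕ) (hm : 2 ≤ m) (x : Fin (m + 1) → Dmin A)
    (hinj : Function.Injective x)
    (hpath : ∀ i : Fin m, T.Adj (x i.castSucc) (x i.succ))
    (h0 : (x 0).1 ≤ a0) (hlast : (x (Fin.last m)).1 ≤ a0)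
    (hmid : ∀ i : Fin m, ¬((x i.castSucc).1 ≤ a0 ∧ (x i.succ).1 ≤ a0))
    (hnr : ¬ (T.induce {β : Dmin A | β.1 ≤ a0}).Reachable
      ⟨x 0, h0⟩ ⟨x (Fin.last m), hlast⟩) :
    ∀ i : Fin m, ∃ α : A, ((x i.castSucc).1 ≤ α ∧ (x i.succ).1 ≤ α) ∧
      ¬((x 0).1 ≤ α ∧ (x (Fin.last m)).1 ≤ α) := by
  obtain ⟨hTle, hTtree⟩ := hT
  intro i
  by_contra hcon
  push_neg at hcon
  -- notation
  set b0 : Dmin A := x 0 with hb0def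
  set bm : Dmin A := x (Fin.last m) with hbmdef
  set u : Dmin A := x i.castSucc with hudef
  set v : Dmin A := x i.succ with hvdef
  have hb0m : b0 ≠ bm := by
    intro h
    have := hinj h
    simp only [Fin.ext_iff, Fin.val_last, Fin.val_zero] at this
    omega
  have hadjnew : (interlaced A).Adj b0 bm := ⟨hb0m, a0, h0, hlast⟩
  -- the walk as a ℕ-indexed function
  set y : ℕ → Dmin A := fun j => x ⟨min j m, Nat.lt_succ_of_le (min_le_right _ _)⟩ with hydef
  have hyc : ∀ (j : ℕ) (h : j < m), y j = x (Fin.castSucc ⟨j, h⟩) := by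
    intro j h
    simp only [hydef]
    congr 1
    exact Fin.ext (by simp only [Fin.coe_castSucc]; omega)
  have hys : ∀ (j : ℕ) (h : j < m), y (j+1) = x (Fin.succ ⟨j, h⟩) := by
    intro j h
    simp only [hydef]
    congr 1
    exact Fin.ext (by simp only [Fin.val_succ]; omega)
  have hy0 : y 0 = b0 := by
    simp only [hydef, hb0def]; congr 1
  have hym : y m = bm := by
    simp only [hydef, hbmdef]; congr 1; exact Fin.ext (by simp only [Fin.val_last]; omega)
  have hyi : y (i : ℕ) = u := by rw [hyc _ i.isLt, hudef]
  have hyis : y ((i : ℕ)+1) = v := by rw [hys _ i.isLt, hvdef]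
  have hstepT : ∀ (j : ℕ), j < m → T.Adj (y j) (y (j+1)) := by
    intro j h
    rw [hyc j h, hys j h]
    exact hpath _
  -- edges of the walk distinct from e_old unless j = i
  have hedge_ne : ∀ (j : ℕ) (h : j < m), j ≠ (i : ℕ) →
      s(y j, y (j+1)) ≠ s(u, v) := by
    intro j h hji heq
    rw [hyc j h, hys j h, hudef, hvdef, Sym2.eq_iff] at heq
    rcases heq with ⟨h1, h2⟩ | ⟨h1, h2⟩
    · have := hinj h1
      simp only [Fin.ext_iff, Fin.coe_castSucc] at this
      omega
    · have e1 := hinj h1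
      have e2 := hinj h2
      simp only [Fin.ext_iff, Fin.coe_castSucc, Fin.val_succ] at e1 e2
      omega
  -- T₀ = T with the old edge removed
  set T0 : SimpleGraph (Dmin A) := T.deleteEdges {s(u, v)} with hT0def
  have hT0adj : ∀ (j : ℕ) (h : j < m), j ≠ (i : ℕ) → T0.Adj (y j) (y (j+1)) := by
    intro j h hji
    rw [hT0def, SimpleGraph.deleteEdges_adj]
    exact ⟨hstepT j h, by simpa using hedge_ne j h hji⟩
  have L1 : T0.Reachable b0 u := by
    rw [← hy0, ← hyi]
    exact chain_reach T0 y 0 (i : ℕ) (Nat.zero_le _)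
      (fun j hj hj' => hT0adj j (by omega) (by omega))
  have L2 : T0.Reachable v bm := by
    rw [← hyis, ← hym]
    exact chain_reach T0 y ((i : ℕ)+1) m (by omega)
      (fun j hj hj' => hT0adj j hj' (by omega))
  -- the exchanged graph
  set T' : SimpleGraph (Dmin A) := T0 ⊔ SimpleGraph.fromEdgeSet {s(b0, bm)} with hT'def
  have hT0le' : T0 ≤ T' := le_sup_left
  have hT'adjnew : T'.Adj b0 bm := by
    rw [hT'def, SimpleGraph.sup_adj]
    exact Or.inr ((SimpleGraph.fromEdgeSet_adj _).mpr ⟨rfl, hb0m⟩)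
  have hT'le : T' ≤ interlaced A := by
    apply sup_le
    · exact le_trans (SimpleGraph.deleteEdges_le _) hTle
    · intro a b hab
      rw [SimpleGraph.fromEdgeSet_adj, Set.mem_singleton_iff, Sym2.eq_iff] at hab
      obtain ⟨h1 | h1, hne⟩ := hab
      · exact ⟨hne, a0, h1.1 ▸ h0, h1.2 ▸ hlast⟩
      · exact ⟨hne, a0, h1.1 ▸ hlast, h1.2 ▸ h0⟩
  -- connectivity of T'
  have Ruv : T'.Reachable u v :=
    ((L1.symm.mono hT0le').trans hT'adjnew.reachable).trans (L2.mono hT0le').symm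
  have hT'conn : T'.Connected := by
    have hne : Nonempty (Dmin A) := ⟨b0⟩
    refine ⟨fun a b => ?_⟩
    refine reach_trans (fun a b hab => ?_) (hTtree.isConnected.preconnected a b)
    by_cases he : s(a, b) = s(u, v)
    · rw [Sym2.eq_iff] at he
      rcases he with ⟨rfl, rfl⟩ | ⟨rfl, rfl⟩
      · exact Ruv
      · exact Ruv.symm
    · exact (hT0le' (SimpleGraph.deleteEdges_adj.mpr ⟨hab, by simpa using he⟩)).reachable
  -- the old edge is a bridge in T
  have hbridge : ¬ (T \ SimpleGraph.fromEdgeSet {s(u, v)}).Reachable u v :=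
    ((SimpleGraph.isBridge_iff).mp
      ((SimpleGraph.isAcyclic_iff_forall_adj_isBridge.mp hTtree.IsAcyclic) (hpath i)))
  -- acyclicity of T'
  have hT'acyclic : T'.IsAcyclic := by
    intro w c hc
    by_cases hmem : s(b0, bm) ∈ c.edges
    · have hre : (T' \ SimpleGraph.fromEdgeSet {s(b0, bm)}).Reachable b0 bm :=
        (SimpleGraph.adj_and_reachable_delete_edges_iff_exists_cycle.mpr ⟨w, c, hc, hmem⟩).2
      have hle2 : (T' \ SimpleGraph.fromEdgeSet {s(b0, bm)}) ≤ T0 := by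
        intro a b hab
        rw [SimpleGraph.sdiff_adj] at hab
        obtain ⟨h1 | h1, h2⟩ := hab
        · exact h1
        · exact absurd h1 h2
      have : T0.Reachable u v := (L1.symm.trans (hre.mono hle2)).trans L2.symm
      exact hbridge this
    · have he : ∀ e ∈ c.edges, e ∈ T.edgeSet := by
        intro e hce
        have := c.edges_subset_edgeSet hce
        rw [hT'def, SimpleGraph.edgeSet_sup] at this
        rcases this with h1 | h1
        · exact (SimpleGraph.edgeSet_mono (SimpleGraph.deleteEdges_le _)) h1
        · rw [SimpleGraph.edgeSet_fromEdgeSet] at h1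
          exact absurd (h1.1.symm ▸ hce) (by rw [← h1.1] at hmem ⊢; exact hmem)
      exact hTtree.IsAcyclic (c.transfer T he) (hc.transfer he)
  have hT'tree : T'.IsTree := ⟨hT'conn, hT'acyclic⟩
  -- the new edge is not an edge of T
  have hnotmem : s(b0, bm) ∉ T.edgeSet := by
    intro hmem
    have hbridge2 : ¬ (T \ SimpleGraph.fromEdgeSet {s(b0, bm)}).Reachable b0 bm :=
      ((SimpleGraph.isBridge_iff).mp
        ((SimpleGraph.isAcyclic_iff_forall_adj_isBridge.mp hTtree.IsAcyclic)
          (T.mem_edgeSet.mp hmem)))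
    apply hbridge2
    have hr : (T \ SimpleGraph.fromEdgeSet {s(b0, bm)}).Reachable (y 0) (y m) := by
      refine chain_reach _ y 0 m (Nat.zero_le _) (fun j hj hj' => ?_)
      rw [SimpleGraph.sdiff_adj]
      refine ⟨hstepT j hj', ?_⟩
      rw [SimpleGraph.fromEdgeSet_adj]
      rintro ⟨hs, -⟩
      rw [Set.mem_singleton_iff, hyc j hj', hys j hj', hb0def, hbmdef, Sym2.eq_iff] at hs
      rcases hs with ⟨h1, h2⟩ | ⟨h1, h2⟩
      · have e1 := hinj h1
        have e2 := hinj h2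
        simp only [Fin.ext_iff, Fin.coe_castSucc, Fin.val_succ, Fin.val_zero, Fin.val_last] at e1 e2
        omega
      · have e1 := hinj h1
        simp only [Fin.ext_iff, Fin.coe_castSucc, Fin.val_last] at e1
        omega
    rwa [hy0, hym] at hr
  have holdmem : s(u, v) ∈ T.edgeSet := T.mem_edgeSet.mpr (hpath i)
  have hnewold : s(b0, bm) ≠ s(u, v) := fun h => hnotmem (h ▸ holdmem)
  -- edge set of T'
  have hE' : T'.edgeSet = (T.edgeSet \ {s(u, v)}) ∪ {s(b0, bm)} := by
    rw [hT'def, SimpleGraph.edgeSet_sup, hT0def, SimpleGraph.edgeSet_deleteEdges,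
      SimpleGraph.edgeSet_fromEdgeSet]
    congr 1
    ext e
    simp only [Set.mem_diff, Set.mem_singleton_iff, Set.mem_setOf_eq]
    constructor
    · rintro ⟨rfl, -⟩; rfl
    · rintro rfl; exact ⟨rfl, fun hd => hb0m (Sym2.mk_isDiag_iff.mp hd)⟩
  -- weight identity
  have hsum : weightA T' + edgeLength s(u, v) = weightA T + edgeLength s(b0, bm) := by
    have e1 : edgeLength s(u, v) =
        ∑ e : Sym2 (Dmin A), if e = s(u, v) then edgeLength e else 0 := by
      rw [Finset.sum_ite_eq' Finset.univ s(u, v) edgeLength]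
      simp
    have e2 : edgeLength s(b0, bm) =
        ∑ e : Sym2 (Dmin A), if e = s(b0, bm) then edgeLength e else 0 := by
      rw [Finset.sum_ite_eq' Finset.univ s(b0, bm) edgeLength]
      simp
    rw [weightA, weightA, e1, e2, ← Finset.sum_add_distrib, ← Finset.sum_add_distrib]
    refine Finset.sum_congr rfl (fun e _ => ?_)
    simp only [hE', Set.mem_union, Set.mem_diff, Set.mem_singleton_iff]
    by_cases h1 : e = s(u, v)
    · subst h1
      simp [holdmem, Ne.symm hnewold]
    · by_cases h2 : e = s(b0, bm)
      · subst h2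
        simp [hnotmem, h1]
      · simp [h1, h2]
  -- strict inequality of lengths
  have hlt : edgeLength s(b0, bm) < edgeLength s(u, v) := by
    have hNcard : ∀ (a b : Dmin A), edgeLength s(a, b) =
        ({γ : Dmin A | ∀ α : A, (∀ β ∈ s(a, b), (β : Dmin A).1 ≤ α) → γ.1 ≤ α}).ncard := by
      intro a b
      rw [edgeLength, ← Nat.card_coe_set_eq]
      rfl
    rw [hNcard, hNcard]
    apply Set.ncard_lt_ncard
    · constructor
      · intro γ hγ α hα
        have hu' : u.1 ≤ α := hα u (Sym2.mem_mk_left _ _)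
        have hv' : v.1 ≤ α := hα v (Sym2.mem_mk_right _ _)
        obtain ⟨hb0', hbm'⟩ := hcon α ⟨hu', hv'⟩
        refine hγ α (fun β hβ => ?_)
        rcases Sym2.mem_iff.mp hβ with rfl | rfl
        · exact hb0'
        · exact hbm'
      · intro hsub
        obtain ⟨w, hwmem, hwna⟩ : ∃ w : Dmin A, w ∈ s(u, v) ∧ ¬ w.1 ≤ a0 := by
          rcases not_and_or.mp (hmid i) with h | h
          · exact ⟨u, Sym2.mem_mk_left _ _, h⟩
          · exact ⟨v, Sym2.mem_mk_right _ _, h⟩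
        have hwO : w ∈ {γ : Dmin A | ∀ α : A, (∀ β ∈ s(u, v), (β : Dmin A).1 ≤ α) → γ.1 ≤ α} :=
          fun α hα => hα w hwmem
        have hwN := hsub hwO
        apply hwna
        refine hwN a0 (fun β hβ => ?_)
        rcases Sym2.mem_iff.mp hβ with rfl | rfl
        · exact h0
        · exact hlast
    · exact Set.toFinite _
  have := hmin T' hT'le hT'tree
  omega
end
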